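/- Kemperman's formula: let (X_i) be i.i.d. nonnegative integer-valued random variables, S_n = X_1 + ... + X_n, and T_k = inf{n ≥ 0 : S_n = n − k} the first passage time of the walk S_n − n to level −k. Then for every 1 ≤ k < n, P(T_k = n) = (k/n) P(S_n = n − k). -/

import Mathlib

open MeasureTheory ProbabilityTheory
open scoped ENNReal


namespace KempermanAux

variable (a : ℕ → ℤ)

/-- Partial sums. -/
def W (m : ℕ) : ℤ := ∑ i ∈ Finset.range m, a i

lemma W_zero : W a 0 = 0 := by simp [W]

lemma W_succ (m : ℕ) : W a (m+1) = W a m + a m := Finset.sum_range_succ a m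

variable {a}

lemma W_ge (ha : ∀ i, -1 ≤ a i) (m : ℕ) : W a m - 1 ≤ W a (m+1) := by
  have := ha m; rw [W_succ]; omega

/-- Skip-free downward intermediate value. -/
lemma hit (ha : ∀ i, -1 ≤ a i) {s u : ℕ} (hsu : s ≤ u) {t : ℤ}
    (hs : t ≤ W a s) (hu : W a u < t) : ∃ j, s ≤ j ∧ j ≤ u ∧ W a j = t := by
  induction u, hsu using Nat.le_induction with
  | base => omega
  | succ u hsu ih =>
    by_cases h : W a u < t
    · obtain ⟨j, h1, h2, h3⟩ := ih h
      exact ⟨j, h1, by omega, h3⟩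
    · have h2 := W_ge ha u
      exact ⟨u, hsu, by omega, by omega⟩

variable (a) in
/-- Running minimum of partial sums up to time `T`. -/
def Mn : ℕ → ℤ
  | 0 => 0
  | T+1 => min (Mn T) (W a (T+1))

lemma Mn_le : ∀ {T j : ℕ}, j ≤ T → Mn a T ≤ W a j := by
  intro T
  induction T with
  | zero => intro j hj; interval_cases j; simp [Mn, W_zero]
  | succ T ih =>
    intro j hj
    rcases Nat.lt_succ_iff_lt_or_eq.mp (Nat.lt_succ_of_le hj) with h | h
    · exact le_trans (min_le_left _ _) (ih (by omega))
    · subst h; exact min_le_right _ _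

lemma Mn_exists (T : ℕ) : ∃ j ≤ T, Mn a T = W a j := by
  induction T with
  | zero => exact ⟨0, le_refl 0, (W_zero a).symm⟩
  | succ T ih =>
    obtain ⟨j, hj, hje⟩ := ih
    rcases le_total (Mn a T) (W a (T+1)) with h | h
    · exact ⟨j, by omega, by rw [show Mn a (T+1) = min (Mn a T) (W a (T+1)) from rfl, min_eq_left h, hje]⟩
    · exact ⟨T+1, le_refl _, by rw [show Mn a (T+1) = min (Mn a T) (W a (T+1)) from rfl, min_eq_right h]⟩

variable (a) in
/-- Strict new minimum predicate. -/
def SMin (m : ℕ) : Prop := ∀ j < m, W a m < W a j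

instance (m : ℕ) : Decidable (SMin a m) := by unfold SMin; infer_instance

/-- Counting strict new minima: the number in `[1, T]` equals the drop of the running min. -/
lemma count_smin (ha : ∀ i, -1 ≤ a i) (T : ℕ) :
    (((Finset.Ico 1 (T+1)).filter (SMin a)).card : ℤ) = - Mn a T := by
  induction T with
  | zero => simp [Mn]
  | succ T ih =>
    have hins : Finset.Ico 1 (T+2) = insert (T+1) (Finset.Ico 1 (T+1)) :=
      Nat.Ico_succ_right_eq_insert_Ico (by omega)
    have hMn : Mn a (T+1) = min (Mn a T) (W a (T+1)) := rfl
    rw [hins, Finset.filter_insert]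
    by_cases h : SMin a (T+1)
    · have h1 : W a (T+1) < Mn a T := by
        obtain ⟨j, hj, hje⟩ := Mn_exists (a := a) T
        rw [hje]; exact h j (by omega)
      have h2 : Mn a T - 1 ≤ W a (T+1) := by
        have := Mn_le (a := a) (le_refl T)
        have := W_ge ha T
        omega
      rw [if_pos h, Finset.card_insert_of_notMem (by simp), hMn]
      push_cast
      rw [min_eq_right (by omega)]
      omega
    · have h1 : Mn a T ≤ W a (T+1) := by
        simp only [SMin, not_forall] at h
        obtain ⟨j, hj, hje⟩ := h
        calc Mn a T ≤ W a j := Mn_le (by omega)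
          _ ≤ W a (T+1) := by omega
      rw [if_neg h, hMn, min_eq_left h1]
      exact ih


section Periodic

variable {n k : ℕ} (hn : 0 < n) (hk : 0 < k)
  (hper : ∀ i, a (i + n) = a i) (hsum : W a n = -(k:ℤ))

include hper hsum in
lemma W_shift : ∀ m, W a (m + n) = W a m - k := by
  intro m
  induction m with
  | zero => simpa [W_zero] using hsum
  | succ m ih =>
    have : m + 1 + n = (m + n) + 1 := by omega
    rw [this, W_succ, W_succ, hper, ih]
    ring

include hn hk hper hsum in
lemma Mn_shift : Mn a (2*n-1) = Mn a (n-1) - k := by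
  apply le_antisymm
  · obtain ⟨j, hj, hje⟩ := Mn_exists (a := a) (n-1)
    calc Mn a (2*n-1) ≤ W a (j + n) := Mn_le (by omega)
      _ = W a j - k := W_shift hper hsum j
      _ = Mn a (n-1) - k := by rw [hje]
  · obtain ⟨j, hj, hje⟩ := Mn_exists (a := a) (2*n-1)
    rw [hje]
    rcases lt_or_ge j n with h | h
    · have h1 : Mn a (n-1) ≤ W a j := Mn_le (by omega)
      omega
    · have h2 : W a (j - n + n) = W a (j - n) - k := W_shift hper hsum (j - n)
      rw [show j - n + n = j by omega] at h2
      have h1 : Mn a (n-1) ≤ W a (j - n) := Mn_le (by omega)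
      omega

include hn hk hper hsum in
lemma count_smin_Ico (ha : ∀ i, -1 ≤ a i) :
    (((Finset.Ico n (2*n)).filter (SMin a)).card) = k := by
  have h1 := count_smin (a := a) ha (2*n-1)
  have h2 := count_smin (a := a) ha (n-1)
  rw [show 2*n-1+1 = 2*n by omega] at h1
  rw [show n-1+1 = n by omega] at h2
  have hsplit : Finset.Ico 1 n ∪ Finset.Ico n (2*n) = Finset.Ico 1 (2*n) :=
    Finset.Ico_union_Ico_eq_Ico (by omega) (by omega)
  have hdisj : Disjoint ((Finset.Ico 1 n).filter (SMin a)) ((Finset.Ico n (2*n)).filter (SMin a)) :=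
    Finset.disjoint_filter_filter (Finset.Ico_disjoint_Ico_consecutive 1 n (2*n))
  have hcard : ((Finset.Ico 1 n).filter (SMin a)).card
      + ((Finset.Ico n (2*n)).filter (SMin a)).card
      = ((Finset.Ico 1 (2*n)).filter (SMin a)).card := by
    rw [← hsplit, Finset.filter_union, Finset.card_union_of_disjoint hdisj]
  have hm := Mn_shift hn hk hper hsum
  omega

include hn hk hper hsum in
lemma good_iff (ha : ∀ i, -1 ≤ a i) {r : ℕ} (hr : r < n) :
    (∀ m < n, W a (r+m) - W a r ≠ -(k:ℤ)) ↔ SMin a (r+n) := by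
  have ht : W a (r+n) = W a r - k := W_shift hper hsum r
  constructor
  · intro hgood
    have key : ∀ m < n, W a (r+n) < W a (r+m) := by
      intro m hm
      by_contra hcon
      push_neg at hcon
      rcases eq_or_lt_of_le hcon with h | h
      · exact hgood m hm (by omega)
      · obtain ⟨j, hj1, hj2, hj3⟩ := hit ha (s := r) (u := r+m) (t := W a r - k)
          (by omega) (by omega) (by omega)
        exact hgood (j - r) (by omega) (by rw [show r + (j - r) = j by omega]; omega)
    intro j hj
    rcases lt_or_ge j r with h | h
    · have h2 : W a (j + n) = W a j - k := W_shift hper hsum j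
      have h3 := key (j + n - r) (by omega)
      rw [show r + (j + n - r) = j + n by omega] at h3
      omega
    · have h3 := key (j - r) (by omega)
      rw [show r + (j - r) = j by omega] at h3
      exact h3
  · intro hs m hm
    have := hs (r+m) (by omega)
    omega

include hn hk hper hsum in
lemma cycle_count (ha : ∀ i, -1 ≤ a i) :
    ((Finset.range n).filter
      (fun r => ∀ m < n, (∑ i ∈ Finset.Ico r (r+m), a i) ≠ -(k:ℤ))).card = k := by
  have hpred : ∀ r < n, (∀ m < n, (∑ i ∈ Finset.Ico r (r+m), a i) ≠ -(k:ℤ)) ↔ SMin a (r+n) := by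
    intro r hr
    rw [← good_iff hn hk hper hsum ha hr]
    constructor <;> intro h m hm <;>
      have h2 := h m hm <;>
      rw [Finset.sum_Ico_eq_sub _ (by omega : r ≤ r + m)] at * <;>
      exact h2
  have hcard : ((Finset.range n).filter
      (fun r => ∀ m < n, (∑ i ∈ Finset.Ico r (r+m), a i) ≠ -(k:ℤ))).card
      = ((Finset.Ico n (2*n)).filter (SMin a)).card := by
    apply Finset.card_nbij (fun r => r + n)
    · intro r hr
      simp only [Finset.mem_coe, Finset.mem_filter, Finset.mem_range] at hr
      simp only [Finset.mem_coe, Finset.mem_filter, Finset.mem_Ico]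
      exact ⟨⟨by omega, by omega⟩, (hpred r hr.1).mp hr.2⟩
    · intro x _ y _ h
      simp only at h
      omega
    · intro m hm
      simp only [Finset.coe_filter, Finset.mem_Ico, Set.mem_setOf_eq] at hm
      refine ⟨m - n, ?_, by simp only []; omega⟩
      simp only [Finset.coe_filter, Finset.mem_range, Set.mem_setOf_eq]
      refine ⟨by omega, (hpred (m-n) (by omega)).mpr ?_⟩
      rw [show m - n + n = m by omega]
      exact hm.2
  rw [hcard]
  exact count_smin_Ico hn hk hper hsum ha

end Periodic

end KempermanAux



namespace KempermanAux

/-- A product of identical measures is invariant under coordinate permutations. -/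
lemma pi_map_perm {ι : Type*} [Fintype ι] (μ : Measure ℕ) [IsProbabilityMeasure μ] (e : ι ≃ ι) :
    (Measure.pi fun _ : ι => μ).map (fun x i => x (e i)) = Measure.pi fun _ : ι => μ := by
  have hmeas : Measurable (fun x : ι → ℕ => fun i => x (e i)) :=
    measurable_pi_iff.mpr fun i => measurable_pi_apply _
  refine (Measure.pi_eq fun s hs => ?_).symm
  rw [Measure.map_apply hmeas (MeasurableSet.univ_pi hs)]
  have hpre : (fun x : ι → ℕ => fun i => x (e i)) ⁻¹' Set.univ.pi s
      = Set.univ.pi (fun j => s (e.symm j)) := by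
    ext x
    simp only [Set.mem_preimage, Set.mem_pi, Set.mem_univ, forall_true_left]
    constructor
    · intro h j
      simpa using h (e.symm j)
    · intro h i
      simpa using h (e i)
  rw [hpre, Measure.pi_pi]
  exact Equiv.prod_comp e.symm (fun i => μ (s i))

/-- The joint law of independent identically distributed variables is the product measure. -/
lemma map_eq_pi {Ω : Type*} [MeasurableSpace Ω] (P : Measure Ω) [IsProbabilityMeasure P]
    (μ : Measure ℕ) [IsProbabilityMeasure μ]
    (X : ℕ → Ω → ℕ) (hmeas : ∀ i, Measurable (X i))
    (hindep : iIndepFun X P)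
    (hlaw : ∀ i, P.map (X i) = μ) (n : ℕ) :
    P.map (fun ω (i : Fin n) => X i ω) = Measure.pi (fun _ : Fin n => μ) := by
  have hF : Measurable (fun ω (i : Fin n) => X i ω) := measurable_pi_iff.mpr fun i => hmeas i
  refine (Measure.pi_eq fun s _ => ?_).symm
  rw [Measure.map_apply hF (MeasurableSet.univ_pi fun _ => trivial)]
  classical
  set sets : ℕ → Set ℕ := fun i => if h : i < n then s ⟨i, h⟩ else Set.univ with hsets
  have hpre : (fun ω (i : Fin n) => X i ω) ⁻¹' Set.univ.pi s
      = ⋂ i ∈ Finset.range n, X i ⁻¹' sets i := by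
    ext ω
    simp only [Set.mem_preimage, Set.mem_pi, Set.mem_univ, forall_true_left, Set.mem_iInter,
      Finset.mem_range]
    constructor
    · intro h i hi
      simpa [hsets, dif_pos hi] using h ⟨i, hi⟩
    · intro h i
      have := h i.val i.isLt
      simpa [hsets, dif_pos i.isLt] using this
  rw [hpre, hindep.measure_inter_preimage_eq_mul (Finset.range n) (fun i _ => trivial)]
  have h1 : ∀ i ∈ Finset.range n, P (X i ⁻¹' sets i) = μ (sets i) := fun i _ => by
    rw [← hlaw i, Measure.map_apply (hmeas i) trivial]
  rw [Finset.prod_congr rfl h1, ← Fin.prod_univ_eq_prod_range (fun i => μ (sets i)) n]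
  exact Finset.prod_congr rfl fun i _ => by simp [hsets, i.isLt]

end KempermanAux
namespace KempermanAux

variable {n k : ℕ}

lemma measSet (s : Set ℕ) : MeasurableSet s := trivial

def BSet (n k : ℕ) : Set (Fin n → ℕ) := {x | ((∑ i, x i : ℕ) : ℤ) = (n:ℤ) - (k:ℤ)}

def ASet (n k : ℕ) (hn : 0 < n) : Set (Fin n → ℕ) :=
  {x | x ∈ BSet n k ∧ ∀ m < n,
    ((∑ i ∈ Finset.range m, x ⟨i % n, Nat.mod_lt i hn⟩ : ℕ) : ℤ) ≠ (m:ℤ) - (k:ℤ)}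

lemma BSet_meas : MeasurableSet (BSet n k) := by
  have h : Measurable fun x : Fin n → ℕ => ∑ i, x i :=
    Finset.measurable_sum _ fun i _ => measurable_pi_apply i
  exact h (measSet {a : ℕ | ((a : ℕ) : ℤ) = (n:ℤ) - (k:ℤ)})

lemma ASet_meas (hn : 0 < n) : MeasurableSet (ASet n k hn) := by
  have heq : ASet n k hn = BSet n k ∩ ⋂ (m : ℕ), ⋂ (_ : m < n),
      {x : Fin n → ℕ |
        ((∑ i ∈ Finset.range m, x ⟨i % n, Nat.mod_lt i hn⟩ : ℕ) : ℤ) ≠ (m:ℤ) - (k:ℤ)} := by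
    ext x
    simp only [ASet, Set.mem_setOf_eq, Set.mem_inter_iff, Set.mem_iInter]
  rw [heq]
  refine BSet_meas.inter <| MeasurableSet.iInter fun m => MeasurableSet.iInter fun _ => ?_
  have h : Measurable fun x : Fin n → ℕ => ∑ i ∈ Finset.range m, x ⟨i % n, Nat.mod_lt i hn⟩ :=
    Finset.measurable_sum _ fun i _ => measurable_pi_apply _
  exact h (measSet {a : ℕ | ((a : ℕ) : ℤ) ≠ (m:ℤ) - (k:ℤ)})

def rot [NeZero n] (r : Fin n) (x : Fin n → ℕ) : Fin n → ℕ := fun i => x (i + r)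

lemma rot_measurable [NeZero n] (r : Fin n) : Measurable (rot r) :=
  measurable_pi_iff.mpr fun _ => measurable_pi_apply _

lemma rot_mem_BSet [NeZero n] (x : Fin n → ℕ) (r : Fin n) :
    rot r x ∈ BSet n k ↔ x ∈ BSet n k := by
  have h : ∑ i, rot r x i = ∑ i, x i := Equiv.sum_comp (Equiv.addRight r) x
  simp only [BSet, Set.mem_setOf_eq, h]

lemma map_rot [NeZero n] (μ : MeasureTheory.Measure ℕ)
    [MeasureTheory.IsProbabilityMeasure μ] (r : Fin n) :
    (MeasureTheory.Measure.pi fun _ : Fin n => μ).map (rot r)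
      = MeasureTheory.Measure.pi fun _ : Fin n => μ :=
  pi_map_perm μ (Equiv.addRight r)

end KempermanAux
namespace KempermanAux

variable {n k : ℕ}

open Classical in
/-- For `x` with total sum `n - k`, exactly `k` of the `n` rotations of `x` lie in `ASet`. -/
lemma count_rot (hn : 0 < n) (hk : 0 < k) {x : Fin n → ℕ} (hx : x ∈ BSet n k) :
    haveI : NeZero n := ⟨by omega⟩
    ((Finset.univ : Finset (Fin n)).filter (fun r => rot r x ∈ ASet n k hn)).card = k := by
  haveI : NeZero n := ⟨by omega⟩
  set a : ℕ → ℤ := fun i => (x ⟨i % n, Nat.mod_lt i hn⟩ : ℤ) - 1 with ha_def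
  have ha : ∀ i, -1 ≤ a i := by intro i; simp only [ha_def]; omega
  have hper : ∀ i, a (i + n) = a i := by
    intro i
    have h : (i + n) % n = i % n := Nat.add_mod_right i n
    simp only [ha_def, h]
  have key : ∀ i : Fin n, (⟨i.val % n, Nat.mod_lt _ hn⟩ : Fin n) = i := fun i =>
    Fin.ext (Nat.mod_eq_of_lt i.isLt)
  have hx' : (∑ i : Fin n, (x i : ℤ)) = (n:ℤ) - k := by
    have h := hx
    simp only [BSet, Set.mem_setOf_eq] at h
    push_cast at h
    exact h
  have hsum : W a n = -(k:ℤ) := by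
    rw [W]
    have h1 : ∑ i ∈ Finset.range n, a i
        = (∑ i ∈ Finset.range n, (x ⟨i % n, Nat.mod_lt i hn⟩ : ℤ)) - n := by
      rw [ha_def, Finset.sum_sub_distrib]
      simp
    have h2 : ∑ i ∈ Finset.range n, (x ⟨i % n, Nat.mod_lt i hn⟩ : ℤ) = ∑ i : Fin n, (x i : ℤ) := by
      rw [← Fin.sum_univ_eq_sum_range (fun i => (x ⟨i % n, Nat.mod_lt i hn⟩ : ℤ)) n]
      exact Finset.sum_congr rfl fun i _ => by rw [key i]
    rw [h1, h2, hx']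
    ring
  -- the rotation-by-`r` partial sums of `x` in terms of `a`
  have hpartial : ∀ (r : Fin n) (m : ℕ),
      (∑ i ∈ Finset.Ico (r : ℕ) ((r : ℕ) + m), a i)
        = ((∑ i ∈ Finset.range m, rot r x ⟨i % n, Nat.mod_lt i hn⟩ : ℕ) : ℤ) - m := by
    intro r m
    rw [Finset.sum_Ico_eq_sum_range, add_tsub_cancel_left]
    have haux : ∀ i : ℕ, ((⟨((r:ℕ) + i) % n, Nat.mod_lt _ hn⟩ : Fin n))
        = (⟨i % n, Nat.mod_lt i hn⟩ : Fin n) + r := by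
      intro i
      apply Fin.ext
      show ((r:ℕ) + i) % n = (i % n + (r:ℕ)) % n
      rw [Nat.mod_add_mod, Nat.add_comm]
    push_cast
    rw [Finset.sum_sub_distrib]
    simp only [ha_def, Finset.sum_const, Finset.card_range, nsmul_eq_mul, mul_one]
    congr 1
    refine Finset.sum_congr rfl fun i _ => ?_
    rw [haux i]
    rfl
  have hequiv : ∀ r : Fin n, (rot r x ∈ ASet n k hn
      ↔ ∀ m < n, (∑ i ∈ Finset.Ico (r : ℕ) ((r : ℕ) + m), a i) ≠ -(k:ℤ)) := by
    intro r
    simp only [ASet, Set.mem_setOf_eq]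
    constructor
    · intro h m hm
      rw [hpartial r m]
      have := h.2 m hm
      omega
    · intro h
      refine ⟨(rot_mem_BSet x r).mpr hx, fun m hm => ?_⟩
      have := h m hm
      rw [hpartial r m] at this
      omega
  have hcy := cycle_count hn hk hper hsum ha
  have hcard : ((Finset.univ : Finset (Fin n)).filter (fun r => rot r x ∈ ASet n k hn)).card
      = ((Finset.range n).filter
        (fun r => ∀ m < n, (∑ i ∈ Finset.Ico r (r+m), a i) ≠ -(k:ℤ))).card := by
    apply Finset.card_nbij (fun r : Fin n => (r : ℕ))
    · intro r hr
      simp only [Finset.mem_coe, Finset.mem_filter, Finset.mem_univ, true_and] at hr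
      simp only [Finset.mem_coe, Finset.mem_filter, Finset.mem_range]
      exact ⟨r.isLt, (hequiv r).mp hr⟩
    · intro r _ s _ h
      exact Fin.ext h
    · intro r hr
      simp only [Finset.coe_filter, Finset.mem_range, Set.mem_setOf_eq] at hr
      refine ⟨⟨r, hr.1⟩, ?_, rfl⟩
      simp only [Finset.coe_filter, Finset.mem_univ, Set.mem_setOf_eq, true_and]
      exact (hequiv ⟨r, hr.1⟩).mpr hr.2
  rw [hcard]
  exact hcy

end KempermanAux

namespace KempermanAux

/-- Kemperman's formula on the product space. -/
lemma pi_main (μ : Measure ℕ) [IsProbabilityMeasure μ] {n k : ℕ} (hn : 0 < n) (hk : 0 < k) :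
    (Measure.pi fun _ : Fin n => μ) (ASet n k hn)
      = ((k:ℝ≥0∞)/(n:ℝ≥0∞)) * (Measure.pi fun _ : Fin n => μ) (BSet n k) := by
  classical
  haveI : NeZero n := ⟨by omega⟩
  set ν := Measure.pi fun _ : Fin n => μ with hν
  have hA : MeasurableSet (ASet n k hn) := ASet_meas hn
  have hB : MeasurableSet (BSet n k) := BSet_meas
  have hAr : ∀ r : Fin n, ν (rot r ⁻¹' ASet n k hn) = ν (ASet n k hn) := fun r => by
    rw [← Measure.map_apply (rot_measurable r) hA, hν, map_rot μ r]
  have hptwise : ∀ x, (∑ r : Fin n, (rot r ⁻¹' ASet n k hn).indicator (1 : (Fin n → ℕ) → ℝ≥0∞) x)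
      = (k:ℝ≥0∞) * (BSet n k).indicator 1 x := by
    intro x
    by_cases hx : x ∈ BSet n k
    · rw [Set.indicator_of_mem hx, Pi.one_apply, mul_one]
      simp only [Set.indicator_apply, Set.mem_preimage, Pi.one_apply]
      rw [Finset.sum_boole]
      rw [count_rot hn hk hx]
    · have h0 : ∀ r : Fin n, x ∉ rot r ⁻¹' ASet n k hn := by
        intro r hmem
        exact hx ((rot_mem_BSet x r).mp hmem.1)
      simp only [Set.indicator_of_notMem hx, Set.indicator_of_notMem (h0 _), mul_zero,
        Finset.sum_const_zero]
  have hkey : ∑ r : Fin n, ν (rot r ⁻¹' ASet n k hn) = (k:ℝ≥0∞) * ν (BSet n k) := by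
    calc ∑ r : Fin n, ν (rot r ⁻¹' ASet n k hn)
        = ∑ r : Fin n, ∫⁻ x, (rot r ⁻¹' ASet n k hn).indicator 1 x ∂ν := by
          refine Finset.sum_congr rfl fun r _ => ?_
          rw [lintegral_indicator_one ((rot_measurable r) hA)]
      _ = ∫⁻ x, ∑ r : Fin n, (rot r ⁻¹' ASet n k hn).indicator 1 x ∂ν :=
          (lintegral_finset_sum _ fun r _ => measurable_one.indicator ((rot_measurable r) hA)).symm
      _ = ∫⁻ x, (k:ℝ≥0∞) * (BSet n k).indicator 1 x ∂ν := lintegral_congr hptwise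
      _ = (k:ℝ≥0∞) * ν (BSet n k) := by
          rw [lintegral_const_mul _ (measurable_one.indicator hB), lintegral_indicator_one hB]
  have hnA : (n:ℝ≥0∞) * ν (ASet n k hn) = (k:ℝ≥0∞) * ν (BSet n k) := by
    rw [← hkey]
    rw [Finset.sum_congr rfl fun r _ => hAr r, Finset.sum_const, Finset.card_univ,
      Fintype.card_fin, nsmul_eq_mul]
  have hn0 : (n:ℝ≥0∞) ≠ 0 := by
    simp only [ne_eq, Nat.cast_eq_zero]
    omega
  have hnt : (n:ℝ≥0∞) ≠ ⊤ := ENNReal.natCast_ne_top n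
  calc ν (ASet n k hn) = (n:ℝ≥0∞)⁻¹ * ((n:ℝ≥0∞) * ν (ASet n k hn)) := by
        rw [← mul_assoc, ENNReal.inv_mul_cancel hn0 hnt, one_mul]
    _ = (n:ℝ≥0∞)⁻¹ * ((k:ℝ≥0∞) * ν (BSet n k)) := by rw [hnA]
    _ = ((k:ℝ≥0∞)/(n:ℝ≥0∞)) * ν (BSet n k) := by
        rw [div_eq_mul_inv]; ring

end KempermanAux

/-- **Kemperman's formula.** Let `(X i)` be i.i.d. nonnegative integer-valued
random variables, `S n = X 1 + ... + X n`, and `T k` the first passage time of the walk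
`S n - n` to `-k`.  For every `1 ≤ k < n`, `P(T k = n) = (k / n) P(S n = n - k)`. -/
theorem kemperman_formula
    {Ω : Type*} [MeasurableSpace Ω] (P : Measure Ω) [IsProbabilityMeasure P]
    (μ : Measure ℕ) [IsProbabilityMeasure μ]
    (X : ℕ → Ω → ℕ) (hmeas : ∀ i, Measurable (X i))
    (hindep : iIndepFun X P)
    (hlaw : ∀ i, P.map (X i) = μ)
    (k n : ℕ) (hk : 1 ≤ k) (hkn : k < n) :
    P {ω | ((∑ i ∈ Finset.range n, X i ω : ℕ) : ℤ) = (n : ℤ) - (k : ℤ) ∧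
        ∀ m < n, ((∑ i ∈ Finset.range m, X i ω : ℕ) : ℤ) ≠ (m : ℤ) - (k : ℤ)}
      = ((k : ℝ≥0∞) / (n : ℝ≥0∞)) *
        P {ω | ((∑ i ∈ Finset.range n, X i ω : ℕ) : ℤ) = (n : ℤ) - (k : ℤ)} := by
  open KempermanAux in
  have hn : 0 < n := by omega
  set F : Ω → (Fin n → ℕ) := fun ω i => X i ω with hF_def
  have hF : Measurable F := measurable_pi_iff.mpr fun i => hmeas i
  have hmap : P.map F = Measure.pi (fun _ : Fin n => μ) :=
    KempermanAux.map_eq_pi P μ X hmeas hindep hlaw n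
  have hsum_eq : ∀ ω, (∑ i : Fin n, F ω i) = ∑ i ∈ Finset.range n, X i ω := fun ω =>
    Fin.sum_univ_eq_sum_range (fun i => X i ω) n
  have hps : ∀ (ω : Ω) (m : ℕ), m < n →
      (∑ i ∈ Finset.range m, F ω ⟨i % n, Nat.mod_lt i hn⟩) = ∑ i ∈ Finset.range m, X i ω := by
    intro ω m hm
    refine Finset.sum_congr rfl fun i hi => ?_
    have hi' : i % n = i := Nat.mod_eq_of_lt (by
      have := Finset.mem_range.mp hi
      omega)
    show X (i % n) ω = X i ω
    rw [hi']
  have hEB : {ω | ((∑ i ∈ Finset.range n, X i ω : ℕ) : ℤ) = (n : ℤ) - (k : ℤ)}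
      = F ⁻¹' KempermanAux.BSet n k := by
    ext ω
    simp only [Set.mem_setOf_eq, Set.mem_preimage, KempermanAux.BSet, hsum_eq ω]
  have hEA : {ω | ((∑ i ∈ Finset.range n, X i ω : ℕ) : ℤ) = (n : ℤ) - (k : ℤ) ∧
        ∀ m < n, ((∑ i ∈ Finset.range m, X i ω : ℕ) : ℤ) ≠ (m : ℤ) - (k : ℤ)}
      = F ⁻¹' KempermanAux.ASet n k hn := by
    ext ω
    simp only [Set.mem_setOf_eq, Set.mem_preimage, KempermanAux.ASet, KempermanAux.BSet,
      hsum_eq ω]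
    constructor
    · rintro ⟨h1, h2⟩
      exact ⟨h1, fun m hm => by rw [hps ω m hm]; exact h2 m hm⟩
    · rintro ⟨h1, h2⟩
      exact ⟨h1, fun m hm => by rw [← hps ω m hm]; exact h2 m hm⟩
  rw [hEA, hEB, ← Measure.map_apply hF (KempermanAux.ASet_meas hn),
    ← Measure.map_apply hF KempermanAux.BSet_meas, hmap]
  exact KempermanAux.pi_main μ hn hk
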